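/- Let f : ℝⁿ \ {0} → ℝ be differentiable and scale-invariant, meaning f(cθ) = f(θ) for every θ ≠ 0 and every real c > 0. Fix θ ≠ 0 with ∇f(θ) ≠ 0, a learning rate η ∈ ℝ, and let θ̃ = θ/‖θ‖ and η̃ = η/‖θ‖. Then a normalized-gradient step with the rescaled learning rate on the normalized parameters yields the same function value as a normalized-gradient step on the original parameters: f(θ̃ + η̃ · ∇f(θ̃)/‖∇f(θ̃)‖) = f(θ + η · ∇f(θ)/‖∇f(θ)‖), provided θ + η∇f(θ)/‖∇f(θ)‖ ≠ 0. -/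
import Mathlib

open InnerProductSpace

lemma grad_scale_inv (n : ℕ) (f : EuclideanSpace ℝ (Fin n) → ℝ)
    (hdiff : ∀ θ : EuclideanSpace ℝ (Fin n), θ ≠ 0 → DifferentiableAt ℝ f θ)
    (hsi : ∀ θ : EuclideanSpace ℝ (Fin n), θ ≠ 0 → ∀ c : ℝ, 0 < c → f (c • θ) = f θ)
    (θ : EuclideanSpace ℝ (Fin n)) (hθ : θ ≠ 0) (c : ℝ) (hc : 0 < c) :
    gradient f (c • θ) = c⁻¹ • gradient f θ := by
  have hcθ : c • θ ≠ 0 := smul_ne_zero hc.ne' hθ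
  have hEq : (fun x => f (c⁻¹ • x)) =ᶠ[nhds (c • θ)] f := by
    filter_upwards [IsOpen.mem_nhds isOpen_compl_singleton hcθ] with x hx
    have hx' : (x : EuclideanSpace ℝ (Fin n)) ≠ 0 := hx
    have h1 : f (c • (c⁻¹ • x)) = f (c⁻¹ • x) :=
      hsi _ (smul_ne_zero (by positivity) hx') c hc
    rw [smul_smul, mul_inv_cancel₀ hc.ne', one_smul] at h1
    exact h1.symm
  have h2 : HasFDerivAt (fun x : EuclideanSpace ℝ (Fin n) => c⁻¹ • x)
      (c⁻¹ • ContinuousLinearMap.id ℝ (EuclideanSpace ℝ (Fin n))) (c • θ) :=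
    (hasFDerivAt_id _).const_smul c⁻¹
  have h1 : HasFDerivAt f (fderiv ℝ f θ) (c⁻¹ • c • θ) := by
    rw [smul_smul, inv_mul_cancel₀ hc.ne', one_smul]
    exact (hdiff θ hθ).hasFDerivAt
  have h3 := h1.comp (c • θ) h2
  have h4 : HasFDerivAt f ((fderiv ℝ f θ).comp
      (c⁻¹ • ContinuousLinearMap.id ℝ (EuclideanSpace ℝ (Fin n)))) (c • θ) :=
    h3.congr_of_eventuallyEq hEq.symm
  have h5 : fderiv ℝ f (c • θ) = c⁻¹ • fderiv ℝ f θ := by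
    rw [h4.fderiv]
    ext v
    simp
  unfold gradient
  rw [h5, map_smul]

theorem stmt6 (n : ℕ) (f : EuclideanSpace ℝ (Fin n) → ℝ)
    (hdiff : ∀ θ : EuclideanSpace ℝ (Fin n), θ ≠ 0 → DifferentiableAt ℝ f θ)
    (hsi : ∀ θ : EuclideanSpace ℝ (Fin n), θ ≠ 0 → ∀ c : ℝ, 0 < c → f (c • θ) = f θ)
    (θ : EuclideanSpace ℝ (Fin n)) (hθ : θ ≠ 0) (hg : gradient f θ ≠ 0) (η : ℝ)
    (hne : θ + η • (‖gradient f θ‖⁻¹ • gradient f θ) ≠ 0) :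
    f (‖θ‖⁻¹ • θ + (η / ‖θ‖) • (‖gradient f (‖θ‖⁻¹ • θ)‖⁻¹ • gradient f (‖θ‖⁻¹ • θ)))
      = f (θ + η • (‖gradient f θ‖⁻¹ • gradient f θ)) := by
  have hθn : (0:ℝ) < ‖θ‖ := norm_pos_iff.mpr hθ
  have hcm : (0:ℝ) < ‖θ‖⁻¹ := by positivity
  have hgr : gradient f (‖θ‖⁻¹ • θ) = ‖θ‖ • gradient f θ := by
    rw [grad_scale_inv n f hdiff hsi θ hθ _ hcm, inv_inv]
  set g := gradient f θ with hgdef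
  have hunit : ‖gradient f (‖θ‖⁻¹ • θ)‖⁻¹ • gradient f (‖θ‖⁻¹ • θ) = ‖g‖⁻¹ • g := by
    rw [hgr, norm_smul, smul_smul]
    congr 1
    rw [Real.norm_eq_abs, abs_of_pos hθn]
    have hgn : (0:ℝ) < ‖g‖ := norm_pos_iff.mpr hg
    field_simp
  rw [hunit]
  have harg : ‖θ‖⁻¹ • θ + (η / ‖θ‖) • (‖g‖⁻¹ • g)
      = ‖θ‖⁻¹ • (θ + η • (‖g‖⁻¹ • g)) := by
    rw [div_eq_inv_mul]
    module
  rw [harg]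
  exact hsi _ hne _ hcm
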